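/- Let n ∈ ℕ and let α : Fin (n+1) → ℝ be strictly positive. Let S_n = {x : Fin n → ℝ | (∀ i, 0 < x_i) ∧ ∑_i x_i < 1} ⊆ ℝ^n with Lebesgue measure. Then ∫_{S_n} (∏_{i : Fin n} x_i^{α_i − 1}) · (1 − ∑_i x_i)^{α_n − 1} dx = (∏_{k : Fin (n+1)} Γ(α_k)) / Γ(∑_k α_k), where α_n denotes the value of α at the last index. (This is the Dirichlet integral, the normalization constant of the Dirichlet distribution.) -/

import Mathlib

open Real MeasureTheory Finset


lemma real_beta_cast {a b : ℝ} {x : ℝ} (hx0 : 0 ≤ x) (hx1 : x ≤ 1) :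
    ((x ^ (a - 1) * (1 - x) ^ (b - 1) : ℝ) : ℂ)
      = (x:ℂ) ^ ((a:ℂ) - 1) * (1 - (x:ℂ)) ^ ((b:ℂ) - 1) := by
  rw [Complex.ofReal_mul, Complex.ofReal_cpow hx0, Complex.ofReal_cpow (by linarith)]
  push_cast
  ring_nf

lemma real_beta_intervalIntegrable {a b : ℝ} (ha : 0 < a) (hb : 0 < b) :
    IntervalIntegrable (fun x : ℝ => x ^ (a - 1) * (1 - x) ^ (b - 1)) volume 0 1 := by
  have h := Complex.betaIntegral_convergent (u := (a : ℂ)) (v := (b : ℂ))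
    (by simpa using ha) (by simpa using hb)
  rw [intervalIntegrable_iff_integrableOn_Ioc_of_le zero_le_one] at h ⊢
  have h2 := h.re
  refine h2.congr ?_
  filter_upwards [ae_restrict_mem measurableSet_Ioc] with x hx
  rw [← real_beta_cast hx.1.le hx.2]
  simp

lemma real_beta {a b : ℝ} (ha : 0 < a) (hb : 0 < b) :
    ∫ x in (0:ℝ)..1, x ^ (a - 1) * (1 - x) ^ (b - 1)
      = Gamma a * Gamma b / Gamma (a + b) := by
  have key := Complex.Gamma_mul_Gamma_eq_betaIntegral (s := (a:ℂ)) (t := (b:ℂ))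
    (by simpa using ha) (by simpa using hb)
  have hbeta : Complex.betaIntegral a b
      = ((∫ x in (0:ℝ)..1, x ^ (a - 1) * (1 - x) ^ (b - 1) : ℝ) : ℂ) := by
    rw [Complex.betaIntegral, ← intervalIntegral.integral_ofReal]
    refine intervalIntegral.integral_congr_ae ?_
    have : ∀ᵐ x : ℝ ∂volume, x ∈ Set.uIoc (0:ℝ) 1 →
        (x:ℂ) ^ ((a:ℂ) - 1) * (1 - (x:ℂ)) ^ ((b:ℂ) - 1)
          = ((x ^ (a - 1) * (1 - x) ^ (b - 1) : ℝ) : ℂ) := by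
      refine Filter.Eventually.of_forall fun x hx => ?_
      rw [Set.uIoc_of_le zero_le_one] at hx
      rw [real_beta_cast hx.1.le hx.2]
    exact this
  rw [hbeta, ← Complex.ofReal_add, Complex.Gamma_ofReal, Complex.Gamma_ofReal,
    Complex.Gamma_ofReal] at key
  have hG : Gamma (a + b) ≠ 0 := (Gamma_pos_of_pos (by linarith)).ne'
  have h2 : Gamma a * Gamma b
      = Gamma (a + b) * ∫ x in (0:ℝ)..1, x ^ (a - 1) * (1 - x) ^ (b - 1) := by
    exact_mod_cast key
  rw [h2]
  field_simp

lemma lintegral_beta {a b : ℝ} (ha : 0 < a) (hb : 0 < b) :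
    ∫⁻ t in Set.Ioo (0:ℝ) 1, ENNReal.ofReal (t ^ (a - 1) * (1 - t) ^ (b - 1))
      = ENNReal.ofReal (Gamma a * Gamma b / Gamma (a + b)) := by
  have hint : IntegrableOn (fun t : ℝ => t ^ (a - 1) * (1 - t) ^ (b - 1)) (Set.Ioo 0 1) := by
    have := (real_beta_intervalIntegrable ha hb).1
    exact this.mono_set Set.Ioo_subset_Ioc_self
  rw [← ofReal_integral_eq_lintegral_ofReal hint ?_]
  · rw [← MeasureTheory.integral_Ioc_eq_integral_Ioo,
      ← intervalIntegral.integral_of_le zero_le_one, real_beta ha hb]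
  · filter_upwards [ae_restrict_mem measurableSet_Ioo] with t ht
    have h1 : 0 ≤ t ^ (a-1) := rpow_nonneg ht.1.le _
    have h2 : 0 ≤ (1-t) ^ (b-1) := rpow_nonneg (by linarith [ht.2]) _
    positivity

lemma lintegral_comp_smul_pi {n : ℕ} (f : (Fin n → ℝ) → ENNReal) (hf : Measurable f)
    {r : ℝ} (hr : 0 < r) :
    ∫⁻ y, f y = ENNReal.ofReal (r ^ n) * ∫⁻ z, f (r • z) := by
  have hmap := Measure.map_addHaar_smul (volume : Measure (Fin n → ℝ)) (r := r) hr.ne'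
  have h1 : ∫⁻ z, f (r • z) = ∫⁻ y, f y ∂(Measure.map (r • ·) volume) :=
    (lintegral_map hf (measurable_const_smul r)).symm
  rw [h1, hmap, lintegral_smul_measure]
  have hd : Module.finrank ℝ (Fin n → ℝ) = n := by simp
  rw [hd, smul_eq_mul, ← mul_assoc, ← ENNReal.ofReal_mul (by positivity), abs_of_nonneg (by positivity),
    mul_inv_cancel₀ (by positivity), ENNReal.ofReal_one, one_mul]

lemma measurableSet_simplex (n : ℕ) :
    MeasurableSet {x : Fin n → ℝ | (∀ i, 0 < x i) ∧ ∑ i, x i < 1} := by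
  have : {x : Fin n → ℝ | (∀ i, 0 < x i) ∧ ∑ i, x i < 1}
      = (⋂ i, {x : Fin n → ℝ | 0 < x i}) ∩ {x | ∑ i, x i < 1} := by
    ext x; simp [Set.mem_iInter]
  rw [this]
  exact (MeasurableSet.iInter fun i =>
      measurableSet_lt measurable_const (measurable_pi_apply i)).inter
    (measurableSet_lt (by fun_prop) measurable_const)

lemma meas_integrand (n : ℕ) (c : Fin n → ℝ) (d : ℝ) :
    Measurable (fun x : Fin n → ℝ =>
      ENNReal.ofReal ((∏ i, x i ^ (c i)) * (1 - ∑ i, x i) ^ d)) := by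
  fun_prop

lemma dirichlet_lintegral (n : ℕ) (α : Fin (n + 1) → ℝ) (hα : ∀ k, 0 < α k) :
    ∫⁻ x in {x : Fin n → ℝ | (∀ i, 0 < x i) ∧ ∑ i, x i < 1},
        ENNReal.ofReal ((∏ i : Fin n, x i ^ (α i.castSucc - 1)) *
          (1 - ∑ i, x i) ^ (α (Fin.last n) - 1))
      = ENNReal.ofReal ((∏ k, Gamma (α k)) / Gamma (∑ k, α k)) := by
  induction n with
  | zero =>
    have hS : {x : Fin 0 → ℝ | (∀ i, 0 < x i) ∧ ∑ i, x i < 1} = Set.univ := by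
      ext x; simp
    rw [hS, Measure.restrict_univ]
    simp [Real.one_rpow, Fin.sum_univ_one, Fin.prod_univ_one, MeasureTheory.volume_pi,
      Measure.pi_univ, div_self (Gamma_pos_of_pos (hα 0)).ne']
  | succ n IH =>
    have hspos : 0 < ∑ k : Fin (n+1), α k.succ :=
      Finset.sum_pos (fun k _ => hα k.succ) Finset.univ_nonempty
    set s : ℝ := ∑ k : Fin (n+1), α k.succ with hsdef
    set C : ℝ := (∏ k : Fin (n+1), Gamma (α k.succ)) / Gamma s with hCdef
    have hCpos : 0 < C :=
      div_pos (Finset.prod_pos fun k _ => Gamma_pos_of_pos (hα k.succ))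
        (Gamma_pos_of_pos hspos)
    set S : Set (Fin (n+1) → ℝ) := {x | (∀ i, 0 < x i) ∧ ∑ i, x i < 1} with hSdef
    have hSmeas : MeasurableSet S := measurableSet_simplex (n+1)
    set F : (Fin (n+1) → ℝ) → ENNReal := fun x => ENNReal.ofReal
      ((∏ i : Fin (n+1), x i ^ (α i.castSucc - 1)) *
        (1 - ∑ i, x i) ^ (α (Fin.last (n+1)) - 1)) with hFdef
    have hFmeas : Measurable F := meas_integrand (n+1) _ _
    set T : Set (ℝ × (Fin n → ℝ)) :=
      {p | (0 < p.1 ∧ ∀ i, 0 < p.2 i) ∧ p.1 + ∑ i, p.2 i < 1} with hTdef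
    have hTmeas : MeasurableSet T := by
      have hT : T = ({p : ℝ × (Fin n → ℝ) | 0 < p.1} ∩ ⋂ i, {p | 0 < p.2 i}) ∩
          {p | p.1 + ∑ i, p.2 i < 1} := by
        ext p; simp [hTdef, Set.mem_iInter, and_assoc]
      rw [hT]
      exact ((measurableSet_lt measurable_const measurable_fst).inter
        (MeasurableSet.iInter fun i =>
          measurableSet_lt measurable_const (by fun_prop))).inter
        (measurableSet_lt (by fun_prop) measurable_const)
    set G : ℝ × (Fin n → ℝ) → ENNReal := T.indicator (fun p => ENNReal.ofReal
      (p.1 ^ (α 0 - 1) * ((∏ i, p.2 i ^ (α i.castSucc.succ - 1)) *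
        (1 - p.1 - ∑ i, p.2 i) ^ (α (Fin.last n).succ - 1)))) with hGdef
    have hGmeas : Measurable G := by
      apply Measurable.indicator _ hTmeas
      fun_prop
    -- pointwise transfer
    have hpoint : ∀ (t : ℝ) (y : Fin n → ℝ), S.indicator F (Fin.cons t y) = G (t, y) := by
      intro t y
      have hmem : (Fin.cons t y ∈ S) ↔ ((t, y) ∈ T) := by
        simp only [hSdef, hTdef, Set.mem_setOf_eq, Fin.forall_fin_succ, Fin.cons_zero,
          Fin.cons_succ, Fin.sum_univ_succ]
      by_cases h : (t, y) ∈ T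
      · rw [Set.indicator_of_mem (hmem.mpr h), hGdef, Set.indicator_of_mem h, hFdef]
        simp only [Fin.prod_univ_succ, Fin.sum_univ_succ, Fin.cons_zero, Fin.cons_succ,
          Fin.castSucc_zero, ← Fin.succ_last, ← Fin.succ_castSucc]
        congr 1
        rw [show (1 : ℝ) - (t + ∑ i, y i) = 1 - t - ∑ i, y i by ring, mul_assoc]
      · rw [Set.indicator_of_notMem (fun hx => h (hmem.mp hx)), hGdef,
          Set.indicator_of_notMem h]
    -- inner integral
    have inner_eq : ∀ t : ℝ, (∫⁻ y, G (t, y)) =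
        Set.indicator (Set.Ioo (0:ℝ) 1)
          (fun t => ENNReal.ofReal (t ^ (α 0 - 1) * (1 - t) ^ (s - 1)) * ENNReal.ofReal C) t := by
      intro t
      by_cases ht : t ∈ Set.Ioo (0:ℝ) 1
      · rw [Set.indicator_of_mem ht]
        obtain ⟨ht0, ht1⟩ := ht
        have h1t : 0 < 1 - t := by linarith
        set U : Set (Fin n → ℝ) := {y | (∀ i, 0 < y i) ∧ ∑ i, y i < 1 - t} with hUdef
        have hUmeas : MeasurableSet U := by
          have hU : U = (⋂ i, {y : Fin n → ℝ | 0 < y i}) ∩ {y | ∑ i, y i < 1 - t} := by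
            ext y; simp [hUdef, Set.mem_iInter]
          rw [hU]
          exact (MeasurableSet.iInter fun i =>
              measurableSet_lt measurable_const (measurable_pi_apply i)).inter
            (measurableSet_lt (by fun_prop) measurable_const)
        set g : (Fin n → ℝ) → ENNReal := U.indicator (fun y => ENNReal.ofReal
          ((∏ i, y i ^ (α i.castSucc.succ - 1)) *
            (1 - t - ∑ i, y i) ^ (α (Fin.last n).succ - 1))) with hgdef
        have hgmeas : Measurable g := by
          apply Measurable.indicator _ hUmeas
          fun_prop
        have hGg : ∀ y, G (t, y) = ENNReal.ofReal (t ^ (α 0 - 1)) * g y := by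
          intro y
          by_cases hy : y ∈ U
          · obtain ⟨hy1, hy2⟩ := hy
            have hyU : y ∈ U := ⟨hy1, hy2⟩
            have hmemT : (t, y) ∈ T := ⟨⟨ht0, hy1⟩, by
              simp only [Set.mem_setOf_eq] at hy2 ⊢
              linarith⟩
            rw [hGdef, Set.indicator_of_mem hmemT, hgdef, Set.indicator_of_mem hyU,
              ← ENNReal.ofReal_mul (rpow_nonneg ht0.le _)]
          · have hmemT : (t, y) ∉ T := by
              intro hmT
              exact hy ⟨hmT.1.2, by linarith [hmT.2]⟩
            rw [hGdef, Set.indicator_of_notMem hmemT, hgdef, Set.indicator_of_notMem hy,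
              mul_zero]
        have hexp : (∑ i : Fin n, (α i.castSucc.succ - 1)) + (α (Fin.last n).succ - 1)
            = s - (n + 1 : ℕ) := by
          rw [Finset.sum_sub_distrib, Finset.sum_const, Finset.card_univ, Fintype.card_fin,
            hsdef, Fin.sum_univ_castSucc (f := fun k : Fin (n+1) => α k.succ)]
          push_cast
          ring
        have hgsc : ∀ z : Fin n → ℝ, g ((1 - t) • z) =
            Set.indicator {z : Fin n → ℝ | (∀ i, 0 < z i) ∧ ∑ i, z i < 1}
              (fun z => ENNReal.ofReal ((1 - t) ^ (s - (n+1 : ℕ)) *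
                ((∏ i, z i ^ (α i.castSucc.succ - 1)) *
                  (1 - ∑ i, z i) ^ (α (Fin.last n).succ - 1)))) z := by
          intro z
          have hsmul : ∀ i, ((1 - t) • z) i = (1 - t) * z i := fun i => rfl
          have hsum : ∑ i, ((1 - t) • z) i = (1 - t) * ∑ i, z i := by
            simp [hsmul, Finset.mul_sum]
          by_cases hz : z ∈ {z : Fin n → ℝ | (∀ i, 0 < z i) ∧ ∑ i, z i < 1}
          · have hmemU : (1 - t) • z ∈ U := by
              refine ⟨fun i => ?_, ?_⟩
              · rw [hsmul]; exact mul_pos h1t (hz.1 i)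
              · rw [hsum]; exact mul_lt_of_lt_one_right h1t hz.2
            rw [hgdef, Set.indicator_of_mem hmemU, Set.indicator_of_mem hz]
            congr 1
            have hprod : ∏ i, ((1 - t) • z) i ^ (α i.castSucc.succ - 1)
                = (1 - t) ^ (∑ i : Fin n, (α i.castSucc.succ - 1)) *
                  ∏ i, z i ^ (α i.castSucc.succ - 1) := by
              rw [Real.rpow_sum_of_pos h1t, ← Finset.prod_mul_distrib]
              exact Finset.prod_congr rfl fun i _ => by
                rw [hsmul, Real.mul_rpow h1t.le (hz.1 i).le]
            have hlast : (1 - t - ∑ i, ((1 - t) • z) i) ^ (α (Fin.last n).succ - 1)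
                = (1 - t) ^ (α (Fin.last n).succ - 1) *
                  (1 - ∑ i, z i) ^ (α (Fin.last n).succ - 1) := by
              rw [hsum, show (1 : ℝ) - t - (1-t) * ∑ i, z i = (1-t) * (1 - ∑ i, z i) by ring,
                Real.mul_rpow h1t.le (by linarith [hz.2])]
            rw [hprod, hlast,
              show ((1-t) ^ (∑ i : Fin n, (α i.castSucc.succ - 1)) *
                  (∏ i, z i ^ (α i.castSucc.succ - 1))) *
                  ((1 - t) ^ (α (Fin.last n).succ - 1) * (1 - ∑ i, z i) ^ (α (Fin.last n).succ - 1))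
                = ((1-t) ^ (∑ i : Fin n, (α i.castSucc.succ - 1)) *
                    (1 - t) ^ (α (Fin.last n).succ - 1)) *
                  ((∏ i, z i ^ (α i.castSucc.succ - 1)) *
                    (1 - ∑ i, z i) ^ (α (Fin.last n).succ - 1)) by ring,
              ← Real.rpow_add h1t, hexp]
          · have hmemU : (1 - t) • z ∉ U := by
              intro hmU
              apply hz
              refine ⟨fun i => ?_, ?_⟩
              · have h := hmU.1 i
                rw [hsmul] at h
                by_contra hne
                push_neg at hne
                nlinarith
              · have h2 := hmU.2
                rw [hsum] at h2
                have h3 : (1-t) * ∑ i, z i < (1-t) * 1 := by rw [mul_one]; exact h2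
                exact (mul_lt_mul_iff_right₀ h1t).mp h3
            rw [hgdef, Set.indicator_of_notMem hmemU, Set.indicator_of_notMem hz]
        have hsplit : ∀ z ∈ {z : Fin n → ℝ | (∀ i, 0 < z i) ∧ ∑ i, z i < 1},
            ENNReal.ofReal ((1 - t) ^ (s - (n+1 : ℕ)) *
                ((∏ i, z i ^ (α i.castSucc.succ - 1)) *
                  (1 - ∑ i, z i) ^ (α (Fin.last n).succ - 1)))
              = ENNReal.ofReal ((1 - t) ^ (s - (n+1 : ℕ))) *
                ENNReal.ofReal ((∏ i, z i ^ (α i.castSucc.succ - 1)) *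
                  (1 - ∑ i, z i) ^ (α (Fin.last n).succ - 1)) := fun z hz =>
          ENNReal.ofReal_mul (rpow_nonneg h1t.le _)
        have hg2 : (∫⁻ z, g ((1 - t) • z))
            = ENNReal.ofReal ((1 - t) ^ (s - (n+1 : ℕ))) * ENNReal.ofReal C := by
          calc ∫⁻ z, g ((1 - t) • z)
              = ∫⁻ z, Set.indicator {z : Fin n → ℝ | (∀ i, 0 < z i) ∧ ∑ i, z i < 1}
                  (fun z => ENNReal.ofReal ((1 - t) ^ (s - (n+1 : ℕ)) *
                    ((∏ i, z i ^ (α i.castSucc.succ - 1)) *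
                      (1 - ∑ i, z i) ^ (α (Fin.last n).succ - 1)))) z :=
                lintegral_congr hgsc
            _ = ∫⁻ z in {z : Fin n → ℝ | (∀ i, 0 < z i) ∧ ∑ i, z i < 1},
                  ENNReal.ofReal ((1 - t) ^ (s - (n+1 : ℕ)) *
                    ((∏ i, z i ^ (α i.castSucc.succ - 1)) *
                      (1 - ∑ i, z i) ^ (α (Fin.last n).succ - 1))) :=
                lintegral_indicator (measurableSet_simplex n) _
            _ = ∫⁻ z in {z : Fin n → ℝ | (∀ i, 0 < z i) ∧ ∑ i, z i < 1},
                  ENNReal.ofReal ((1 - t) ^ (s - (n+1 : ℕ))) *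
                    ENNReal.ofReal ((∏ i, z i ^ (α i.castSucc.succ - 1)) *
                      (1 - ∑ i, z i) ^ (α (Fin.last n).succ - 1)) :=
                setLIntegral_congr_fun (measurableSet_simplex n)
                  hsplit
            _ = ENNReal.ofReal ((1 - t) ^ (s - (n+1 : ℕ))) *
                  ∫⁻ z in {z : Fin n → ℝ | (∀ i, 0 < z i) ∧ ∑ i, z i < 1},
                    ENNReal.ofReal ((∏ i, z i ^ (α i.castSucc.succ - 1)) *
                      (1 - ∑ i, z i) ^ (α (Fin.last n).succ - 1)) :=
                lintegral_const_mul' _ _ ENNReal.ofReal_ne_top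
            _ = ENNReal.ofReal ((1 - t) ^ (s - (n+1 : ℕ))) * ENNReal.ofReal C := by
                rw [IH (fun k => α k.succ) (fun k => hα k.succ), ← hsdef, ← hCdef]
        calc ∫⁻ y, G (t, y) = ∫⁻ y, ENNReal.ofReal (t ^ (α 0 - 1)) * g y :=
              lintegral_congr hGg
          _ = ENNReal.ofReal (t ^ (α 0 - 1)) * ∫⁻ y, g y :=
              lintegral_const_mul' _ _ ENNReal.ofReal_ne_top
          _ = ENNReal.ofReal (t ^ (α 0 - 1)) *
                (ENNReal.ofReal ((1-t) ^ n) * ∫⁻ z, g ((1 - t) • z)) := by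
              rw [← lintegral_comp_smul_pi g hgmeas h1t]
          _ = ENNReal.ofReal (t ^ (α 0 - 1) * (1 - t) ^ (s - 1)) * ENNReal.ofReal C := by
              rw [hg2, ← mul_assoc, ← mul_assoc,
                ← ENNReal.ofReal_mul (rpow_nonneg ht0.le _),
                ← ENNReal.ofReal_mul (by positivity)]
              congr 2
              rw [mul_assoc, ← Real.rpow_natCast (1 - t) n, ← Real.rpow_add h1t]
              congr 1
              push_cast
              ring
      · rw [Set.indicator_of_notMem ht]
        have hzero : ∀ y : Fin n → ℝ, G (t, y) = 0 := by
          intro y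
          apply Set.indicator_of_notMem
          rintro ⟨⟨ht0, hy⟩, hsum⟩
          exact ht ⟨ht0, by
            have : (0:ℝ) ≤ ∑ i, y i := Finset.sum_nonneg fun i _ => (hy i).le
            linarith⟩
        simp [hzero]
    -- main chain
    have hmp := ((volume_preserving_piFinSuccAbove (fun _ : Fin (n+1) => ℝ) 0).symm)
    calc ∫⁻ x in S, F x
        = ∫⁻ x, S.indicator F x := (lintegral_indicator hSmeas F).symm
      _ = ∫⁻ p : ℝ × (Fin n → ℝ),
            S.indicator F ((MeasurableEquiv.piFinSuccAbove (fun _ : Fin (n+1) => ℝ) 0).symm p) :=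
          (hmp.lintegral_comp (hFmeas.indicator hSmeas)).symm
      _ = ∫⁻ p : ℝ × (Fin n → ℝ), G p := by
          refine lintegral_congr fun p => ?_
          simp_rw [MeasurableEquiv.piFinSuccAbove_symm_apply, Fin.insertNthEquiv,
            Equiv.coe_fn_mk, Fin.insertNth_zero']
          exact hpoint p.1 p.2
      _ = ∫⁻ t : ℝ, ∫⁻ y : Fin n → ℝ, G (t, y) := by
          rw [Measure.volume_eq_prod, lintegral_prod _ hGmeas.aemeasurable]
      _ = ∫⁻ t : ℝ, Set.indicator (Set.Ioo (0:ℝ) 1)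
            (fun t => ENNReal.ofReal (t ^ (α 0 - 1) * (1 - t) ^ (s - 1)) * ENNReal.ofReal C) t :=
          lintegral_congr inner_eq
      _ = ∫⁻ t in Set.Ioo (0:ℝ) 1,
            ENNReal.ofReal (t ^ (α 0 - 1) * (1 - t) ^ (s - 1)) * ENNReal.ofReal C :=
          lintegral_indicator measurableSet_Ioo _
      _ = (∫⁻ t in Set.Ioo (0:ℝ) 1, ENNReal.ofReal (t ^ (α 0 - 1) * (1 - t) ^ (s - 1))) *
            ENNReal.ofReal C := lintegral_mul_const' _ _ ENNReal.ofReal_ne_top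
      _ = ENNReal.ofReal (Gamma (α 0) * Gamma s / Gamma (α 0 + s)) * ENNReal.ofReal C := by
          rw [lintegral_beta (hα 0) hspos]
      _ = ENNReal.ofReal ((∏ k, Gamma (α k)) / Gamma (∑ k, α k)) := by
          rw [← ENNReal.ofReal_mul (le_of_lt (div_pos
            (mul_pos (Gamma_pos_of_pos (hα 0)) (Gamma_pos_of_pos hspos))
            (Gamma_pos_of_pos (by linarith [hα 0]))))]
          congr 1
          rw [hCdef, Fin.prod_univ_succ (f := fun k : Fin (n+2) => Gamma (α k)),
            Fin.sum_univ_succ (f := fun k : Fin (n+2) => α k), ← hsdef]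
          have h1 : Gamma s ≠ 0 := (Gamma_pos_of_pos hspos).ne'
          have h2 : Gamma (α 0 + s) ≠ 0 := (Gamma_pos_of_pos (by linarith [hα 0])).ne'
          field_simp

/-- The Dirichlet integral: the normalization constant of the Dirichlet distribution. -/
theorem dirichlet_integral (n : ℕ) (α : Fin (n + 1) → ℝ) (hα : ∀ k, 0 < α k) :
    ∫ x in {x : Fin n → ℝ | (∀ i, 0 < x i) ∧ ∑ i, x i < 1},
        (∏ i : Fin n, x i ^ (α i.castSucc - 1)) * (1 - ∑ i, x i) ^ (α (Fin.last n) - 1) =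
      (∏ k, Real.Gamma (α k)) / Real.Gamma (∑ k, α k) := by
  have hS := measurableSet_simplex n
  have hnn : 0 ≤ᵐ[volume.restrict {x : Fin n → ℝ | (∀ i, 0 < x i) ∧ ∑ i, x i < 1}]
      fun x : Fin n → ℝ => (∏ i, x i ^ (α i.castSucc - 1)) *
        (1 - ∑ i, x i) ^ (α (Fin.last n) - 1) := by
    filter_upwards [ae_restrict_mem hS] with x hx
    have h1 : 0 ≤ ∏ i, x i ^ (α i.castSucc - 1) :=
      Finset.prod_nonneg fun i _ => rpow_nonneg (hx.1 i).le _
    have h2 : 0 ≤ (1 - ∑ i, x i) ^ (α (Fin.last n) - 1) :=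
      rpow_nonneg (by linarith [hx.2]) _
    positivity
  have hmeas : AEStronglyMeasurable
      (fun x : Fin n → ℝ => (∏ i, x i ^ (α i.castSucc - 1)) *
        (1 - ∑ i, x i) ^ (α (Fin.last n) - 1))
      (volume.restrict {x : Fin n → ℝ | (∀ i, 0 < x i) ∧ ∑ i, x i < 1}) :=
    (by fun_prop : Measurable (fun x : Fin n → ℝ => (∏ i, x i ^ (α i.castSucc - 1)) *
        (1 - ∑ i, x i) ^ (α (Fin.last n) - 1))).aestronglyMeasurable
  rw [MeasureTheory.integral_eq_lintegral_of_nonneg_ae hnn hmeas]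
  rw [dirichlet_lintegral n α hα]
  have hnum : 0 < ∏ k, Real.Gamma (α k) := Finset.prod_pos fun k _ => Gamma_pos_of_pos (hα k)
  have hden : 0 < Real.Gamma (∑ k, α k) :=
    Gamma_pos_of_pos (Finset.sum_pos (fun k _ => hα k) Finset.univ_nonempty)
  exact ENNReal.toReal_ofReal (by positivity)
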